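/- Embedding lemma: Let γ ∈ (0, 1/160), let d ≥ 2 be an integer, and let N be any positive integer with N ≤ (1/(2·√(40γ)))^{d−2}. Then there exist vectors u_1,…,u_N, v_1,…,v_N ∈ ℝ^d such that for all i, j ∈ {1,…,N}: ‖u_i‖ ≤ 1, ‖v_j‖ ≤ 1, ⟨u_i, v_j⟩ ≥ γ whenever i = j, and ⟨u_i, v_j⟩ ≤ −γ whenever i ≠ j. -/

import Mathlib

open Metric MeasureTheory
open scoped RealInnerProductSpace ENNReal

set_option maxHeartbeats 1000000 in
lemma packing (n : ℕ) (δ : ℝ) (hδ : 0 < δ) (N : ℕ) (hN : (N : ℝ) ≤ (1 / δ) ^ n) :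
    ∃ y : Fin N → EuclideanSpace ℝ (Fin n),
      (∀ i, ‖y i‖ ≤ 1) ∧ (∀ i j, i ≠ j → δ ≤ ‖y i - y j‖) := by
  classical
  rcases Nat.eq_zero_or_pos n with hn | hn
  · subst hn
    refine ⟨fun _ => 0, fun i => by simp, fun i j hij => absurd ?_ hij⟩
    have hN1 : (N : ℝ) ≤ 1 := by simpa using hN
    have : N ≤ 1 := by exact_mod_cast hN1
    have h1 := i.isLt; have h2 := j.isLt
    exact Fin.ext (by omega)
  · set E := EuclideanSpace ℝ (Fin n) with hE
    haveI : Nonempty (Fin n) := ⟨⟨0, hn⟩⟩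
    haveI : Nontrivial E := inferInstanceAs (Nontrivial (PiLp 2 fun _ : Fin n => ℝ))
    set B : Set E := closedBall 0 1 with hB
    set P : Finset E → Prop :=
      fun S => ↑S ⊆ B ∧ ∀ x ∈ S, ∀ y ∈ S, x ≠ y → δ ≤ dist x y with hP
    -- finite covering of B by δ/2 balls
    obtain ⟨F, hFfin, hFcov⟩ : ∃ F : Set E, F.Finite ∧ B ⊆ ⋃ x ∈ F, ball x (δ / 2) := by
      have h := (isCompact_closedBall (0 : E) 1).totallyBounded
      rw [Metric.totallyBounded_iff] at h
      exact h (δ / 2) (by positivity)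
    -- cards of separated sets are bounded
    have hcardbd : ∀ S : Finset E, P S → S.card ≤ hFfin.toFinset.card := by
      intro S hS
      have hmem : ∀ x ∈ S, ∃ c ∈ F, dist x c < δ / 2 := by
        intro x hx
        have := hFcov (hS.1 hx)
        simpa [Set.mem_iUnion, Metric.mem_ball] using this
      set f : E → E := fun x => if hx : ∃ c ∈ F, dist x c < δ / 2 then hx.choose else 0 with hf
      have hfspec : ∀ x ∈ S, f x ∈ F ∧ dist x (f x) < δ / 2 := by
        intro x hx
        have h' := hmem x hx
        simp only [hf, dif_pos h']
        exact ⟨h'.choose_spec.1, h'.choose_spec.2⟩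
      refine Finset.card_le_card_of_injOn f (fun x hx => ?_) ?_
      · exact hFfin.mem_toFinset.mpr (hfspec x hx).1
      · intro x hx y hy hxy
        by_contra hne
        have h1 := (hfspec x hx).2
        have h2 := (hfspec y hy).2
        have := hS.2 x hx y hy hne
        have : dist x y ≤ dist x (f x) + dist (f y) y := by
          rw [hxy]; exact dist_triangle _ _ _
        rw [dist_comm (f y) y] at this
        linarith [hS.2 x hx y hy hne]
    -- a maximal separated set
    set A : Set ℕ := {k | ∃ S : Finset E, P S ∧ S.card = k} with hA
    have hAne : A.Nonempty := ⟨0, ∅, ⟨by simp, by simp⟩, rfl⟩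
    have hAbd : BddAbove A := by
      refine ⟨hFfin.toFinset.card, fun k hk => ?_⟩
      obtain ⟨S, hS, rfl⟩ := hk
      exact hcardbd S hS
    obtain ⟨S, hS, hScard⟩ : sSup A ∈ A := Nat.sSup_mem hAne hAbd
    -- maximality gives covering
    have hcov : B ⊆ ⋃ x ∈ (S : Set E), ball x δ := by
      intro z hz
      by_contra hzc
      have hfar : ∀ x ∈ S, δ ≤ dist z x := by
        intro x hx
        by_contra hlt
        exact hzc (Set.mem_biUnion hx (by push_neg at hlt; simpa [Metric.mem_ball] using hlt))
      have hzS : z ∉ S := fun hzS => by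
        have := hfar z hzS; rw [dist_self] at this; linarith
      have hins : P (insert z S) := by
        constructor
        · intro x hx
          simp only [Finset.coe_insert, Set.mem_insert_iff] at hx
          rcases hx with rfl | hx
          · exact hz
          · exact hS.1 hx
        · intro x hx y hy hxy
          simp only [Finset.mem_insert] at hx hy
          rcases hx with rfl | hx <;> rcases hy with rfl | hy
          · exact absurd rfl hxy
          · exact hfar y hy
          · rw [dist_comm]; exact hfar x hx
          · exact hS.2 x hx y hy hxy
      have : (insert z S).card ∈ A := ⟨_, hins, rfl⟩
      have hle := le_csSup hAbd this
      rw [Finset.card_insert_of_notMem hzS, hScard] at hle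
      omega
    -- volume argument
    set μ : Measure E := volume with hμ
    have hball : ∀ x : E, μ (ball x δ) = ENNReal.ofReal (δ ^ n) * μ (ball 0 1) := by
      intro x
      rw [Measure.addHaar_ball μ x hδ.le, finrank_euclideanSpace_fin]
    have h1 : μ (ball 0 1) ≤ μ B := measure_mono ball_subset_closedBall
    have h2 : μ B ≤ ∑ x ∈ S, μ (ball x δ) :=
      (measure_mono hcov).trans (measure_biUnion_finset_le S _)
    have h3 : ∑ x ∈ S, μ (ball x δ) = (S.card : ℝ≥0∞) * ENNReal.ofReal (δ ^ n) * μ (ball 0 1) := by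
      rw [Finset.sum_congr rfl (fun x _ => hball x), Finset.sum_const, nsmul_eq_mul, mul_assoc]
    have hpos : μ (ball (0 : E) 1) ≠ 0 := (measure_ball_pos μ 0 one_pos).ne'
    have hfin : μ (ball (0 : E) 1) ≠ ⊤ := measure_ball_lt_top.ne
    have h4 : (1 : ℝ≥0∞) ≤ (S.card : ℝ≥0∞) * ENNReal.ofReal (δ ^ n) := by
      rw [← ENNReal.mul_le_mul_iff_left hpos hfin, one_mul]
      exact h1.trans (h2.trans h3.le)
    have h5 : (1 : ℝ) ≤ (S.card : ℝ) * δ ^ n := by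
      have : (1 : ℝ≥0∞) ≤ ENNReal.ofReal ((S.card : ℝ) * δ ^ n) := by
        rwa [ENNReal.ofReal_mul (by positivity), ENNReal.ofReal_natCast]
      exact_mod_cast ENNReal.one_le_ofReal.mp this
    have hδn : (0:ℝ) < δ ^ n := pow_pos hδ n
    have hNcard : N ≤ S.card := by
      have hub : (N : ℝ) * δ ^ n ≤ 1 := by
        rw [one_div, inv_pow] at hN
        calc (N : ℝ) * δ ^ n ≤ (δ ^ n)⁻¹ * δ ^ n :=
              mul_le_mul_of_nonneg_right hN hδn.le
          _ = 1 := inv_mul_cancel₀ hδn.ne'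
      have : (N : ℝ) ≤ (S.card : ℝ) := by nlinarith
      exact_mod_cast this
    obtain ⟨T, hTsub, hTcard⟩ := Finset.exists_subset_card_eq hNcard
    set e := T.equivFinOfCardEq hTcard with he
    refine ⟨fun i => ((e.symm i : T) : E), fun i => ?_, fun i j hij => ?_⟩
    · have hmem : ((e.symm i : T) : E) ∈ B := hS.1 (hTsub (e.symm i).2)
      simpa [hB, mem_closedBall, dist_zero_right] using hmem
    · have hne : ((e.symm i : T) : E) ≠ ((e.symm j : T) : E) := by
        intro h
        exact hij (by simpa using e.symm.injective (Subtype.ext h))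
      have := hS.2 _ (hTsub (e.symm i).2) _ (hTsub (e.symm j).2) hne
      rwa [dist_eq_norm] at this

noncomputable def pad (m : ℕ) (x : EuclideanSpace ℝ (Fin m)) (a b : ℝ) :
    EuclideanSpace ℝ (Fin m ⊕ Fin 2) :=
  (WithLp.equiv 2 _).symm (Sum.elim (fun k => x k) (fun j => if j = 0 then a else b))

lemma inner_pad (m : ℕ) (x x' : EuclideanSpace ℝ (Fin m)) (a b a' b' : ℝ) :
    ⟪pad m x a b, pad m x' a' b'⟫ = ⟪x, x'⟫ + (a * a' + b * b') := by
  simp [pad, PiLp.inner_apply, RCLike.inner_apply, Fintype.sum_sum_type, Fin.sum_univ_two]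
  ring

lemma norm_pad_sq (m : ℕ) (x : EuclideanSpace ℝ (Fin m)) (a b : ℝ) :
    ‖pad m x a b‖ ^ 2 = ‖x‖ ^ 2 + (a ^ 2 + b ^ 2) := by
  rw [← real_inner_self_eq_norm_sq, inner_pad, real_inner_self_eq_norm_sq]; ring

set_option maxHeartbeats 1000000 in
/-- Embedding lemma: for `γ ∈ (0, 1/160)`, `d ≥ 2` and any positive integer
`N ≤ (1/(2√(40γ)))^{d−2}`, there exist vectors `u_1,…,u_N, v_1,…,v_N` in `ℝ^d` of norm at
most `1` with `⟪u_i, v_i⟫ ≥ γ` and `⟪u_i, v_j⟫ ≤ −γ` for `i ≠ j`. -/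
theorem embedding_lemma (γ : ℝ) (hγ0 : 0 < γ) (hγ1 : γ < 1 / 160)
    (d : ℕ) (hd : 2 ≤ d) (N : ℕ) (hN : 0 < N)
    (hNle : (N : ℝ) ≤ (1 / (2 * Real.sqrt (40 * γ))) ^ (d - 2)) :
    ∃ u v : Fin N → EuclideanSpace ℝ (Fin d),
      (∀ i, ‖u i‖ ≤ 1) ∧ (∀ j, ‖v j‖ ≤ 1) ∧
      (∀ i, γ ≤ ⟪u i, v i⟫) ∧
      (∀ i j, i ≠ j → ⟪u i, v j⟫ ≤ -γ) := by
  classical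
  set m := d - 2 with hm
  have hmd : m + 2 = d := by omega
  set δ : ℝ := 2 * Real.sqrt (40 * γ) with hδdef
  have hsq40 : Real.sqrt (40 * γ) ^ 2 = 40 * γ := Real.sq_sqrt (by linarith)
  have hδ : 0 < δ := by
    have : 0 < Real.sqrt (40 * γ) := Real.sqrt_pos.mpr (by linarith)
    positivity
  have hδsq : δ ^ 2 = 160 * γ := by
    rw [hδdef, mul_pow, hsq40]; ring
  obtain ⟨y, hy1, hysep⟩ := packing m δ hδ N hNle
  set s : ℝ := Real.sqrt (1 / 80) with hsdef
  have hs2 : s ^ 2 = 1 / 80 := Real.sq_sqrt (by norm_num)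
  have hs0 : 0 < s := Real.sqrt_pos.mpr (by norm_num)
  set a0 : ℝ := Real.sqrt (1 / 40) with ha0def
  have ha2 : a0 ^ 2 = 1 / 40 := Real.sq_sqrt (by norm_num)
  set e : (Fin m ⊕ Fin 2) ≃ Fin d := finSumFinEquiv.trans (finCongr hmd) with he
  set Φ : EuclideanSpace ℝ (Fin m ⊕ Fin 2) ≃ₗᵢ[ℝ] EuclideanSpace ℝ (Fin d) :=
    LinearIsometryEquiv.piLpCongrLeft 2 ℝ ℝ e with hΦ
  set U : Fin N → EuclideanSpace ℝ (Fin d) :=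
    fun i => Φ (pad m (a0 • y i) s ((γ - (1 / 80) * ‖y i‖ ^ 2) / s)) with hU
  set V : Fin N → EuclideanSpace ℝ (Fin d) :=
    fun j => Φ (pad m (a0 • y j) (-((1 / 80) * ‖y j‖ ^ 2) / s) s) with hV
  have key : ∀ i j, ⟪U i, V j⟫ = γ - (1 / 80) * ‖y i - y j‖ ^ 2 := by
    intro i j
    rw [hU, hV]
    rw [LinearIsometryEquiv.inner_map_map, inner_pad, real_inner_smul_left,
      real_inner_smul_right]
    have e1 : s * (-((1 / 80) * ‖y j‖ ^ 2) / s) = -((1 / 80) * ‖y j‖ ^ 2) := by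
      field_simp
    have e2 : ((γ - (1 / 80) * ‖y i‖ ^ 2) / s) * s = γ - (1 / 80) * ‖y i‖ ^ 2 :=
      div_mul_cancel₀ _ hs0.ne'
    have haa : a0 * a0 = 1 / 40 := by nlinarith [ha2]
    have e3 : a0 * (a0 * ⟪y i, y j⟫) = (1 / 40) * ⟪y i, y j⟫ := by
      rw [← mul_assoc, haa]
    rw [e1, e2, e3, norm_sub_sq_real]
    ring
  have hnormsq : ∀ w : EuclideanSpace ℝ (Fin m), ∀ a b : ℝ,
      ‖Φ (pad m (a0 • w) a b)‖ ^ 2 = (1 / 40) * ‖w‖ ^ 2 + (a ^ 2 + b ^ 2) := by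
    intro w a b
    rw [LinearIsometryEquiv.norm_map, norm_pad_sq, norm_smul, mul_pow]
    have : ‖a0‖ ^ 2 = 1 / 40 := by
      rw [Real.norm_eq_abs, sq_abs]; exact ha2
    rw [this]
  have hq : ∀ i, (0:ℝ) ≤ ‖y i‖ ^ 2 ∧ ‖y i‖ ^ 2 ≤ 1 := by
    intro i
    exact ⟨sq_nonneg _, by nlinarith [hy1 i, norm_nonneg (y i)]⟩
  have hnormU : ∀ i, ‖U i‖ ≤ 1 := by
    intro i
    obtain ⟨hq0, hq1⟩ := hq i
    have ht : ((γ - (1 / 80) * ‖y i‖ ^ 2) / s) ^ 2 ≤ 1 / 80 := by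
      rw [div_pow, hs2]
      nlinarith
    have h2 : ‖U i‖ ^ 2 ≤ 1 := by
      rw [hU, hnormsq]
      nlinarith [hs2]
    nlinarith [norm_nonneg (U i)]
  have hnormV : ∀ j, ‖V j‖ ≤ 1 := by
    intro j
    obtain ⟨hq0, hq1⟩ := hq j
    have ht : (-((1 / 80) * ‖y j‖ ^ 2) / s) ^ 2 ≤ 1 / 80 := by
      rw [div_pow, hs2]
      nlinarith
    have h2 : ‖V j‖ ^ 2 ≤ 1 := by
      rw [hV, hnormsq]
      nlinarith [hs2]
    nlinarith [norm_nonneg (V j)]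
  refine ⟨U, V, hnormU, hnormV, fun i => ?_, fun i j hij => ?_⟩
  · rw [key i i]; simp
  · rw [key i j]
    have hdij := hysep i j hij
    have : δ ^ 2 ≤ ‖y i - y j‖ ^ 2 := by nlinarith [norm_nonneg (y i - y j)]
    nlinarith [hδsq]
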